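/- arXiv:2407.00916 — 3 statements merged into one kernel-verified Lean document; each statement's English description precedes it below -/
import Mathlib

section
/- Let σ : ℕ → ℝ with σ_t ≥ 0 for all t ≥ 1. Then for any T ≥ 1, ∑_{t=1}^T σ_t / √(1 + ∑_{τ=1}^{t-1} σ_τ) ≤ 2·√(∑_{τ=1}^T σ_τ) + max_{1 ≤ t ≤ T} σ_t. -/
lemma key_ineq (u a M : ℝ) (hu : 1 ≤ u) (ha : 0 ≤ a) (haM : a ≤ M) :
    a / Real.sqrt u ≤
      (2 * Real.sqrt (u + a) - M / Real.sqrt (u + a))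
        - (2 * Real.sqrt u - M / Real.sqrt u) := by
  have hx2 : Real.sqrt u ^ 2 = u := Real.sq_sqrt (by linarith)
  have hy2 : Real.sqrt (u + a) ^ 2 = u + a := Real.sq_sqrt (by linarith)
  set x := Real.sqrt u with hxdef
  set y := Real.sqrt (u + a) with hydef
  have hxnn : 0 ≤ x := Real.sqrt_nonneg u
  have hx0 : 0 < x := by nlinarith
  have hxy : x ≤ y := Real.sqrt_le_sqrt (by linarith)
  have hy0 : 0 < y := lt_of_lt_of_le hx0 hxy
  have haxy : a = y^2 - x^2 := by linarith
  have hxx : x * x ≤ x * y := by nlinarith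
  have h1 : y * (y - x) ≤ M := by nlinarith
  have key : (y - x) * (y * (y - x) - M) ≤ 0 :=
    mul_nonpos_of_nonneg_of_nonpos (by linarith) (by linarith)
  have h2 : a * y ≤ 2*(y-x)*x*y + M*(y-x) := by nlinarith [key]
  have h3 : a ≤ 2*(y-x)*x + M*(y-x)/y := by
    calc a = a * y / y := by field_simp
      _ ≤ (2*(y-x)*x*y + M*(y-x)) / y := by gcongr
      _ = 2*(y-x)*x + M*(y-x)/y := by field_simp
  rw [div_le_iff₀ hx0]
  have expand : (2 * y - M / y - (2 * x - M / x)) * x = 2*(y-x)*x + M*(y-x)/y := by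
    field_simp; ring
  rw [expand]; exact h3

theorem stmt_3 (σ : ℕ → ℝ) (hσ : ∀ t, 1 ≤ t → 0 ≤ σ t) (T : ℕ) (hT : 1 ≤ T) :
    ∑ t ∈ Finset.Icc 1 T, σ t / Real.sqrt (1 + ∑ τ ∈ Finset.Icc 1 (t - 1), σ τ) ≤
      2 * Real.sqrt (∑ τ ∈ Finset.Icc 1 T, σ τ) +
        (Finset.Icc 1 T).sup' (Finset.nonempty_Icc.mpr hT) σ := by
  set M := (Finset.Icc 1 T).sup' (Finset.nonempty_Icc.mpr hT) σ with hMdef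
  set S : ℕ → ℝ := fun t => ∑ τ ∈ Finset.Icc 1 t, σ τ with hSdef
  have hSnn : ∀ t, 0 ≤ S t := fun t =>
    Finset.sum_nonneg fun τ hτ => hσ τ (Finset.mem_Icc.mp hτ).1
  have hMσ : ∀ t ∈ Finset.Icc 1 T, σ t ≤ M := fun t ht => Finset.le_sup' σ ht
  have hM0 : 0 ≤ M := le_trans (hσ 1 le_rfl) (hMσ 1 (Finset.mem_Icc.mpr ⟨le_rfl, hT⟩))
  set g : ℕ → ℝ := fun t => 2 * Real.sqrt (1 + S t) - M / Real.sqrt (1 + S t) with hgdef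
  have hstep : ∀ t ∈ Finset.Icc 1 T,
      σ t / Real.sqrt (1 + S (t - 1)) ≤ g t - g (t - 1) := by
    intro t ht
    obtain ⟨ht1, htT⟩ := Finset.mem_Icc.mp ht
    have hSt : S t = S (t - 1) + σ t := by
      have h : t - 1 + 1 = t := Nat.succ_pred_eq_of_pos ht1
      simp only [hSdef]
      rw [← h, Finset.sum_Icc_succ_top (by omega), Nat.add_sub_cancel]
    have := key_ineq (1 + S (t - 1)) (σ t) M (by linarith [hSnn (t - 1)]) (hσ t ht1) (hMσ t ht)
    simp only [hgdef, hSt]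
    convert this using 3 <;> ring_nf
  have htel : ∑ t ∈ Finset.Icc 1 T, (g t - g (t - 1)) = g T - g 0 := by
    rw [show Finset.Icc 1 T = Finset.Ico 1 (T + 1) by rw [Finset.Ico_add_one_right_eq_Icc],
      Finset.sum_Ico_eq_sum_range]
    simp only [Nat.add_sub_cancel, Nat.add_sub_cancel_left]
    have := Finset.sum_range_sub (f := g) T
    simpa [add_comm] using this
  have hsum : ∑ t ∈ Finset.Icc 1 T, σ t / Real.sqrt (1 + S (t - 1)) ≤ g T - g 0 :=
    htel ▸ Finset.sum_le_sum hstep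
  have hg0 : g 0 = 2 - M := by
    simp [hgdef, hSdef]
  have hsqle : Real.sqrt (1 + S T) ≤ 1 + Real.sqrt (S T) := by
    rw [show (1 : ℝ) + S T = 1 + S T from rfl]
    have h1 : (0:ℝ) ≤ 1 + Real.sqrt (S T) := by positivity
    nlinarith [Real.sq_sqrt (hSnn T), Real.sqrt_nonneg (S T),
      Real.sq_sqrt (show (0:ℝ) ≤ 1 + S T by linarith [hSnn T]),
      Real.sqrt_nonneg (1 + S T)]
  have hdivnn : 0 ≤ M / Real.sqrt (1 + S T) := by positivity
  calc ∑ t ∈ Finset.Icc 1 T, σ t / Real.sqrt (1 + S (t - 1)) ≤ g T - g 0 := hsum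
    _ = 2 * Real.sqrt (1 + S T) - M / Real.sqrt (1 + S T) - 2 + M := by rw [hg0]; ring
    _ ≤ 2 * Real.sqrt (S T) + M := by nlinarith [hsqle]
end

section
/- Let K ≥ 1, B > 0, U > 0 and let a ∈ ℝ^K satisfy ∑_{i=1}^K a_i² ≤ U². Then ∑_{i=1}^K ln(1 + exp(-|a_i|)) ≥ K·ln(1 + exp(-U/√K)). -/
/-- Tangent line inequality for `log (1 + exp x)` at `c`. -/
lemma tangent_log_one_add_exp (c t : ℝ) :
    Real.log (1 + Real.exp c) + Real.exp c / (1 + Real.exp c) * (t - c) ≤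
      Real.log (1 + Real.exp t) := by
  have hec : (0:ℝ) < 1 + Real.exp c := by positivity
  set p : ℝ := Real.exp c / (1 + Real.exp c) with hp
  have hp0 : 0 ≤ p := by positivity
  have hp1 : p ≤ 1 := by
    rw [hp, div_le_one hec]; linarith [Real.exp_pos c]
  have hconv := convexOn_exp.2 (Set.mem_univ (0:ℝ)) (Set.mem_univ (t - c))
    (by linarith : (0:ℝ) ≤ 1 - p) hp0 (by ring)
  simp only [smul_eq_mul, mul_zero, zero_add, Real.exp_zero, mul_one] at hconv
  -- hconv : exp (p * (t - c)) ≤ (1 - p) + p * exp (t - c)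
  have hposR : 0 < (1 - p) + p * Real.exp (t - c) :=
    lt_of_lt_of_le (Real.exp_pos _) hconv
  have hid : 1 + Real.exp t = (1 + Real.exp c) * ((1 - p) + p * Real.exp (t - c)) := by
    have h1 : Real.exp (t - c) * Real.exp c = Real.exp t := by
      rw [← Real.exp_add]; ring_nf
    rw [hp]; field_simp; nlinarith [h1]
  rw [hid, Real.log_mul (ne_of_gt hec) (ne_of_gt hposR)]
  have hlog : p * (t - c) ≤ Real.log ((1 - p) + p * Real.exp (t - c)) := by
    calc p * (t - c) = Real.log (Real.exp (p * (t - c))) := (Real.log_exp _).symm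
      _ ≤ _ := Real.log_le_log (Real.exp_pos _) hconv
  linarith

lemma log_one_add_exp_neg (t : ℝ) :
    Real.log (1 + Real.exp (-t)) = Real.log (1 + Real.exp t) - t := by
  have h : 1 + Real.exp (-t) = Real.exp (-t) * (1 + Real.exp t) := by
    rw [mul_add, mul_one, ← Real.exp_add]; simp [add_comm]
  rw [h, Real.log_mul (ne_of_gt (Real.exp_pos _)) (by positivity), Real.log_exp]; ring

theorem stmt_11 (K : ℕ) (hK : 1 ≤ K) (B U : ℝ) (hB : 0 < B) (hU : 0 < U)
    (a : Fin K → ℝ) (ha : ∑ i, (a i) ^ 2 ≤ U ^ 2) :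
    (K : ℝ) * Real.log (1 + Real.exp (-(U / Real.sqrt K))) ≤
      ∑ i, Real.log (1 + Real.exp (-|a i|)) := by
  have hKpos : (0:ℝ) < K := by exact_mod_cast hK
  have hsK : 0 < Real.sqrt K := Real.sqrt_pos.mpr hKpos
  set c : ℝ := U / Real.sqrt K with hc
  have hc0 : 0 < c := div_pos hU hsK
  set p : ℝ := Real.exp c / (1 + Real.exp c) with hp
  have hec : (0:ℝ) < 1 + Real.exp c := by positivity
  have hp1 : p ≤ 1 := by rw [hp, div_le_one hec]; linarith [Real.exp_pos c]
  -- Cauchy-Schwarz: ∑ |a i| ≤ K * c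
  have hS : ∑ i, |a i| ≤ (K:ℝ) * c := by
    have hcs := sq_sum_le_card_mul_sum_sq (s := Finset.univ) (f := fun i => |a i|)
    simp only [Finset.card_univ, Fintype.card_fin, sq_abs] at hcs
    have hKc : (K:ℝ) * c = Real.sqrt K * U := by
      rw [hc]; field_simp
      linear_combination (-1) * Real.sq_sqrt hKpos.le
    have h2 : (∑ i, |a i|) ^ 2 ≤ (Real.sqrt K * U) ^ 2 := by
      calc (∑ i, |a i|) ^ 2 ≤ (K:ℝ) * ∑ i, (a i)^2 := hcs
        _ ≤ (K:ℝ) * U ^ 2 := by nlinarith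
        _ = (Real.sqrt K * U) ^ 2 := by
            rw [mul_pow, Real.sq_sqrt hKpos.le]
    rw [hKc]
    have h3 := Real.sqrt_le_sqrt h2
    rwa [Real.sqrt_sq (by positivity), Real.sqrt_sq (by positivity)] at h3
  -- pointwise tangent bound
  have hpt : ∀ i : Fin K, Real.log (1 + Real.exp (-c)) - (1 - p) * (|a i| - c) ≤
      Real.log (1 + Real.exp (-|a i|)) := by
    intro i
    have h1 := tangent_log_one_add_exp c (|a i|)
    rw [log_one_add_exp_neg, log_one_add_exp_neg]
    simp only [hp]; linarith
  calc (K : ℝ) * Real.log (1 + Real.exp (-c))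
      ≤ ∑ i, (Real.log (1 + Real.exp (-c)) - (1 - p) * (|a i| - c)) := by
        rw [Finset.sum_sub_distrib]
        simp only [Finset.sum_const, Finset.card_univ, Fintype.card_fin, nsmul_eq_mul]
        have : ∑ i, (1 - p) * (|a i| - c) = (1 - p) * ((∑ i, |a i|) - K * c) := by
          rw [← Finset.mul_sum, Finset.sum_sub_distrib]
          simp [Finset.card_univ]
        rw [this]
        nlinarith
    _ ≤ ∑ i, Real.log (1 + Real.exp (-|a i|)) := Finset.sum_le_sum fun i _ => hpt i
end

section
/- Let p̃ ∈ ℝ^K be defined by p̃_j = exp(-η·C_j)/∑_{i=1}^K exp(-η·C_i) for η > 0 and C ∈ ℝ^K, and define Γ(η) = (1/η)·ln((1/K)·∑_{j=1}^K exp(-η·C_j)). Then the derivative of Γ with respect to η equals (1/η²)·KL(p̃, u) ≥ 0, where u is the uniform distribution on [K] and KL(p̃, u) = ∑_j p̃_j·ln(K·p̃_j). -/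
theorem stmt_14 (K : ℕ) (hK : 1 ≤ K) (C : Fin K → ℝ) (η : ℝ) (hη : 0 < η) :
    HasDerivAt (fun e : ℝ => (1 / e) * Real.log ((1 / K) * ∑ j, Real.exp (-e * C j)))
      ((1 / η ^ 2) * ∑ j,
        (Real.exp (-η * C j) / ∑ i, Real.exp (-η * C i)) *
          Real.log (K * (Real.exp (-η * C j) / ∑ i, Real.exp (-η * C i)))) η ∧
    0 ≤ (1 / η ^ 2) * ∑ j,
        (Real.exp (-η * C j) / ∑ i, Real.exp (-η * C i)) *
          Real.log (K * (Real.exp (-η * C j) / ∑ i, Real.exp (-η * C i))) := by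
  have hK0 : (0:ℝ) < (K:ℝ) := by exact_mod_cast Nat.lt_of_lt_of_le Nat.zero_lt_one hK
  set S : ℝ := ∑ i, Real.exp (-η * C i) with hSdef
  have hS : 0 < S := Finset.sum_pos (fun i _ => Real.exp_pos _)
    ⟨⟨0, by omega⟩, Finset.mem_univ _⟩
  set S' : ℝ := ∑ j, Real.exp (-η * C j) * (-C j) with hS'def
  have hderivS : HasDerivAt (fun e : ℝ => ∑ j, Real.exp (-e * C j)) S' η := by
    apply HasDerivAt.fun_sum
    intro j _
    have h1 : HasDerivAt (fun e : ℝ => -e * C j) (-C j) η := by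
      simpa using (hasDerivAt_id η).neg.mul_const (C j)
    simpa using h1.exp
  have hlog : HasDerivAt (fun e : ℝ => Real.log ((1/(K:ℝ)) * ∑ j, Real.exp (-e * C j)))
      (S' / S) η := by
    have h2 := ((hderivS.const_mul ((1:ℝ)/(K:ℝ))).log (by positivity))
    rw [← hSdef] at h2
    rwa [mul_div_mul_left _ _ (by positivity : (1:ℝ)/(K:ℝ) ≠ 0)] at h2
  have hinv : HasDerivAt (fun e : ℝ => 1 / e) (-(1/η^2)) η := by
    simpa [one_div] using hasDerivAt_inv (ne_of_gt hη)
  have hmain := hinv.mul hlog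
  have hsum : ∑ j, (Real.exp (-η * C j) / S) * Real.log ((K:ℝ) * (Real.exp (-η * C j) / S))
      = (Real.log K - Real.log S) + η * (S'/S) := by
    have h1 : ∀ j : Fin K, (Real.exp (-η * C j) / S) * Real.log ((K:ℝ) * (Real.exp (-η * C j) / S))
        = (Real.exp (-η * C j)/S) * (Real.log K - Real.log S)
          + η * ((Real.exp (-η * C j) * (-C j))/S) := by
      intro j
      rw [Real.log_mul (ne_of_gt hK0) (by positivity),
        Real.log_div (by positivity) (ne_of_gt hS), Real.log_exp]
      ring
    rw [Finset.sum_congr rfl (fun j _ => h1 j), Finset.sum_add_distrib,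
      ← Finset.sum_mul, ← Finset.sum_div, ← hSdef]
    have h2 : ∑ j, η * ((Real.exp (-η * C j) * (-C j))/S) = η * (S'/S) := by
      rw [Finset.sum_div, Finset.mul_sum]
    rw [h2, div_self (ne_of_gt hS), one_mul]
  have hnn : 0 ≤ ∑ j, (Real.exp (-η * C j) / S) *
      Real.log ((K:ℝ) * (Real.exp (-η * C j) / S)) := by
    have hterm : ∀ j : Fin K,
        -((Real.exp (-η * C j) / S) * Real.log ((K:ℝ) * (Real.exp (-η * C j) / S)))
          ≤ 1/(K:ℝ) - Real.exp (-η * C j) / S := by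
      intro j
      have hp : 0 < Real.exp (-η * C j) / S := by positivity
      have hx : 0 < ((K:ℝ) * (Real.exp (-η * C j) / S))⁻¹ := by positivity
      have hlog := Real.log_le_sub_one_of_pos hx
      rw [Real.log_inv] at hlog
      have := mul_le_mul_of_nonneg_left hlog (le_of_lt hp)
      calc -((Real.exp (-η * C j) / S) * Real.log ((K:ℝ) * (Real.exp (-η * C j) / S)))
          = (Real.exp (-η * C j) / S) * (-Real.log ((K:ℝ) * (Real.exp (-η * C j) / S))) := by ring
        _ ≤ (Real.exp (-η * C j) / S) * (((K:ℝ) * (Real.exp (-η * C j) / S))⁻¹ - 1) := this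
        _ = 1/(K:ℝ) - Real.exp (-η * C j) / S := by
            field_simp
    have hsumle := Finset.sum_le_sum (fun j (_ : j ∈ Finset.univ) => hterm j)
    have heq : ∑ j : Fin K, (1/(K:ℝ) - Real.exp (-η * C j) / S) = 0 := by
      rw [Finset.sum_sub_distrib, Finset.sum_const, ← Finset.sum_div, ← hSdef,
        div_self (ne_of_gt hS), Finset.card_univ, Fintype.card_fin]
      rw [nsmul_eq_mul, mul_one_div_cancel hK0.ne', sub_self]
    rw [heq, Finset.sum_neg_distrib] at hsumle
    linarith
  constructor
  · refine hmain.congr_deriv ?_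
    rw [hsum, Real.log_mul (by positivity) (ne_of_gt hS), Real.log_div one_ne_zero
      (ne_of_gt hK0), Real.log_one]
    field_simp
    ring
  · exact mul_nonneg (by positivity) hnn
end
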